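/- Let N ≥ 3 and let w, z ∈ ℝ^N be linearly independent. Set δ = ‖w‖²‖z‖² − ⟨w,z⟩² and let I(w,z) be the (N−1)-dimensional volume of { t ∈ (ℝw)^⊥ : |⟨z,t⟩| ≤ ‖t‖ ≤ 1 }. Then I(w,z) = 2·((N−2)/(N−1))·V_{N−2}·(‖w‖/δ^{1/2})·(1 + O(min{1, ‖w‖²/δ})), where V_{N−2} is the volume of the unit ball in ℝ^{N−2} and the implied constant depends only on N. -/

import Mathlib

open MeasureTheory

noncomputable section

/-- The volume of the unit ball in `ℝ^k` (Euclidean). -/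
def ballVol (k : ℕ) : ℝ :=
  (volume (Metric.ball (0 : EuclideanSpace ℝ (Fin k)) 1)).toReal

open Metric Set

lemma ballVol_pos (k : ℕ) : 0 < ballVol k :=
  ENNReal.toReal_pos (measure_ball_pos _ _ one_pos).ne' measure_ball_lt_top.ne

lemma radial_integral (m : ℕ) (hm : 1 ≤ m) {ρ : ℝ} (hρ : 0 ≤ ρ) :
    ∫ y in Metric.closedBall (0 : EuclideanSpace ℝ (Fin m)) ρ, ‖y‖ =
      ((m : ℝ)/((m : ℝ)+1)) * ballVol m * ρ^(m+1) := by
  haveI : Nontrivial (EuclideanSpace ℝ (Fin m)) :=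
    ⟨EuclideanSpace.single ⟨0, hm⟩ 1, 0, by
      intro h
      have := congrFun (congrArg (fun x : EuclideanSpace ℝ (Fin m) => (x : Fin m → ℝ)) h) ⟨0, hm⟩
      simp [EuclideanSpace.single] at this⟩
  have hdim : Module.finrank ℝ (EuclideanSpace ℝ (Fin m)) = m := by
    simp [finrank_euclideanSpace]
  set f : ℝ → ℝ := fun r => if r ≤ ρ then r else 0 with hf
  have h1 : ∫ y in Metric.closedBall (0 : EuclideanSpace ℝ (Fin m)) ρ, ‖y‖ =
      ∫ y : EuclideanSpace ℝ (Fin m), f ‖y‖ := by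
    rw [← integral_indicator (measurableSet_closedBall)]
    congr 1
    ext y
    by_cases hy : y ∈ Metric.closedBall (0 : EuclideanSpace ℝ (Fin m)) ρ
    · rw [indicator_of_mem hy]
      rw [mem_closedBall_zero_iff] at hy
      simp [f, hy]
    · rw [indicator_of_notMem hy]
      rw [mem_closedBall_zero_iff] at hy
      simp [f, hy]
  have h2 : ∫ r in Ioi (0:ℝ), r ^ (m - 1) • f r = ρ^(m+1)/((m:ℝ)+1) := by
    have hIoi : Ioi (0:ℝ) = Ioc 0 ρ ∪ Ioi ρ := (Ioc_union_Ioi_eq_Ioi hρ).symm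
    have heq : EqOn (fun r : ℝ => r ^ (m-1) • f r) (fun r : ℝ => r ^ m) (Ioc 0 ρ) := by
      intro r hr
      simp only [f, smul_eq_mul, if_pos hr.2]
      rw [← pow_succ]
      congr 1
      omega
    have hint1 : IntegrableOn (fun r : ℝ => r ^ (m-1) • f r) (Ioc 0 ρ) := by
      refine (((intervalIntegral.intervalIntegrable_pow m (μ := volume) (a := 0)
        (b := ρ)).1)).congr_fun ?_ measurableSet_Ioc
      exact fun r hr => (heq hr).symm
    have heq2 : EqOn (fun r : ℝ => r ^ (m-1) • f r) 0 (Ioi ρ) := by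
      intro r hr
      simp [f, not_le.2 (mem_Ioi.1 hr)]
    have hint2 : IntegrableOn (fun r : ℝ => r ^ (m-1) • f r) (Ioi ρ) :=
      (integrableOn_zero).congr_fun (fun r hr => (heq2 hr).symm) measurableSet_Ioi
    rw [hIoi, setIntegral_union (Ioc_disjoint_Ioi le_rfl) measurableSet_Ioi hint1 hint2,
      setIntegral_congr_fun measurableSet_Ioc heq, setIntegral_congr_fun measurableSet_Ioi heq2,
      ← intervalIntegral.integral_of_le hρ, integral_pow]
    simp
  rw [h1, integral_fun_norm_addHaar volume f, hdim, h2]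
  have hm1 : ((m:ℝ)+1) ≠ 0 := by positivity
  rw [nsmul_eq_mul, smul_eq_mul]
  show (m:ℝ) * ((volume (ball (0 : EuclideanSpace ℝ (Fin m)) 1)).toReal * (ρ ^ (m + 1) / (↑m + 1))) = _
  rw [show (volume (ball (0 : EuclideanSpace ℝ (Fin m)) 1)).toReal = ballVol m from rfl]
  field_simp

lemma graph_null {α : Type*} [MeasureSpace α] [SigmaFinite (volume : Measure α)]
    {g : α → ℝ} (hg : Measurable g) :
    (volume : Measure (α × ℝ)) {p : α × ℝ | p.2 = g p.1} = 0 := by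
  have hms : MeasurableSet {p : α × ℝ | p.2 = g p.1} :=
    measurableSet_eq_fun measurable_snd (hg.comp measurable_fst)
  rw [Measure.volume_eq_prod, Measure.prod_apply hms]
  have : ∀ x : α, (volume : Measure ℝ) (Prod.mk x ⁻¹' {p : α × ℝ | p.2 = g p.1}) = 0 := by
    intro x
    have : (Prod.mk x ⁻¹' {p : α × ℝ | p.2 = g p.1}) = {g x} := by
      ext t; simp [Set.mem_preimage]
    rw [this]
    exact Real.volume_singleton
  simp [this]

lemma vol_transfer (m : ℕ) (P : ℝ → ℝ → Prop)
    (hP : MeasurableSet {q : ℝ × ℝ | P q.1 q.2}) :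
    volume {x : EuclideanSpace ℝ (Fin (m+1)) | P (∑ j, x j ^ 2) (x 0)}
      = volume {p : EuclideanSpace ℝ (Fin m) × ℝ | P (‖p.1‖^2 + p.2^2) p.2} := by
  classical
  set Φ : EuclideanSpace ℝ (Fin (m+1)) ≃ᵐ EuclideanSpace ℝ (Fin m) × ℝ :=
    (MeasurableEquiv.toLp 2 (Fin (m+1) → ℝ)).symm.trans
      ((MeasurableEquiv.piFinSuccAbove (fun _ : Fin (m+1) => ℝ) 0).trans
        ((MeasurableEquiv.prodComm : ℝ × (Fin m → ℝ) ≃ᵐ (Fin m → ℝ) × ℝ).trans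
          (MeasurableEquiv.prodCongr (MeasurableEquiv.toLp 2 (Fin m → ℝ))
            (MeasurableEquiv.refl ℝ)))) with hΦdef
  have hΦ : MeasurePreserving Φ volume volume := by
    have h1 := EuclideanSpace.volume_preserving_symm_measurableEquiv_toLp (Fin (m+1))
    have h2 := MeasureTheory.volume_preserving_piFinSuccAbove (fun _ : Fin (m+1) => ℝ) 0
    have h3 : MeasurePreserving (MeasurableEquiv.prodComm : ℝ × (Fin m → ℝ) ≃ᵐ (Fin m → ℝ) × ℝ) volume volume := by
      rw [Measure.volume_eq_prod, Measure.volume_eq_prod]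
      exact Measure.measurePreserving_swap
    have h4 : MeasurePreserving (MeasurableEquiv.prodCongr
        (MeasurableEquiv.toLp 2 (Fin m → ℝ)) (MeasurableEquiv.refl ℝ)) volume volume := by
      rw [Measure.volume_eq_prod, Measure.volume_eq_prod]
      exact ((EuclideanSpace.volume_preserving_symm_measurableEquiv_toLp (Fin m)).symm
        (MeasurableEquiv.toLp 2 (Fin m → ℝ)).symm).prod (MeasurePreserving.id _)
    exact (h4.comp (h3.comp (h2.comp h1))).comp (MeasurePreserving.id _)
  have hmem : ∀ x : EuclideanSpace ℝ (Fin (m+1)),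
      ((Φ x).2 = x 0 ∧ ‖(Φ x).1‖^2 = ∑ j : Fin m, x j.succ ^ 2) := by
    intro x
    constructor
    · rfl
    · have : (Φ x).1 = (MeasurableEquiv.toLp 2 (Fin m → ℝ)) (Fin.removeNth 0 x.ofLp) := rfl
      rw [this]
      rw [EuclideanSpace.norm_eq]
      rw [Real.sq_sqrt (by positivity)]
      congr 1
      ext j
      simp [Fin.removeNth, Fin.tail, Fin.zero_succAbove, MeasurableEquiv.coe_toLp, sq_abs]
  have hset : {x : EuclideanSpace ℝ (Fin (m+1)) | P (∑ j, x j ^ 2) (x 0)} =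
      Φ ⁻¹' {p : EuclideanSpace ℝ (Fin m) × ℝ | P (‖p.1‖^2 + p.2^2) p.2} := by
    ext x
    obtain ⟨h1, h2⟩ := hmem x
    simp only [Set.mem_setOf_eq, Set.mem_preimage, h1, h2]
    rw [show (∑ j : Fin (m+1), x j ^ 2) = (∑ j : Fin m, x j.succ ^ 2) + x 0 ^ 2 by
      rw [Fin.sum_univ_succ]; ring]
  rw [hset]
  refine hΦ.measure_preimage ?_
  have : {p : EuclideanSpace ℝ (Fin m) × ℝ | P (‖p.1‖^2 + p.2^2) p.2} =
      (fun p : EuclideanSpace ℝ (Fin m) × ℝ => (‖p.1‖^2 + p.2^2, p.2)) ⁻¹' {q : ℝ × ℝ | P q.1 q.2} := rfl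
  rw [this]
  exact (((measurable_fst.norm.pow_const 2).add (measurable_snd.pow_const 2)).prodMk
    measurable_snd) hP |>.nullMeasurableSet

lemma cone_lintegral (m : ℕ) (hm : 1 ≤ m) {c r : ℝ} (hc : 0 ≤ c) (hr : 0 ≤ r) :
    ∫⁻ y in Metric.closedBall (0 : EuclideanSpace ℝ (Fin m)) r,
        ENNReal.ofReal (((fun y : EuclideanSpace ℝ (Fin m) => c * ‖y‖) - (fun y : EuclideanSpace ℝ (Fin m) => -(c * ‖y‖))) y)
      = ENNReal.ofReal (2*c*(((m:ℝ)/((m:ℝ)+1)) * ballVol m * r^(m+1))) := by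
  have hint : IntegrableOn (fun y : EuclideanSpace ℝ (Fin m) => 2*c*‖y‖)
      (Metric.closedBall 0 r) :=
    ((continuous_const.mul continuous_norm).continuousOn).integrableOn_compact
      (isCompact_closedBall _ _)
  have hnn : 0 ≤ᵐ[volume.restrict (Metric.closedBall (0 : EuclideanSpace ℝ (Fin m)) r)]
      (fun y : EuclideanSpace ℝ (Fin m) => 2*c*‖y‖) :=
    Filter.Eventually.of_forall (fun y => by positivity)
  calc ∫⁻ y in Metric.closedBall (0 : EuclideanSpace ℝ (Fin m)) r,
        ENNReal.ofReal (((fun y : EuclideanSpace ℝ (Fin m) => c * ‖y‖) - (fun y : EuclideanSpace ℝ (Fin m) => -(c * ‖y‖))) y)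
      = ∫⁻ y in Metric.closedBall (0 : EuclideanSpace ℝ (Fin m)) r,
        ENNReal.ofReal (2*c*‖y‖) := by
        apply lintegral_congr
        intro y
        congr 1
        simp only [Pi.sub_apply]
        ring
    _ = ENNReal.ofReal (∫ y in Metric.closedBall (0 : EuclideanSpace ℝ (Fin m)) r, 2*c*‖y‖) :=
        (ofReal_integral_eq_lintegral_ofReal hint hnn).symm
    _ = ENNReal.ofReal (2*c*(((m:ℝ)/((m:ℝ)+1)) * ballVol m * r^(m+1))) := by
        rw [MeasureTheory.integral_const_mul, radial_integral m hm hr]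

lemma vol_cone_ge (m : ℕ) (hm : 1 ≤ m) {c r : ℝ} (hc : 0 ≤ c) (hr : 0 ≤ r) :
    ENNReal.ofReal (2*c*(((m:ℝ)/((m:ℝ)+1)) * ballVol m * r^(m+1)))
      ≤ volume {p : EuclideanSpace ℝ (Fin m) × ℝ |
          p.1 ∈ Metric.closedBall 0 r ∧ p.2 ∈ Ioo (-(c*‖p.1‖)) (c*‖p.1‖)} := by
  have hflip : {p : EuclideanSpace ℝ (Fin m) × ℝ |
      p.1 ∈ Metric.closedBall 0 r ∧ p.2 ∈ Ioo (-(c*‖p.1‖)) (c*‖p.1‖)} =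
      regionBetween (fun y => -(c*‖y‖)) (fun y => c*‖y‖) (Metric.closedBall 0 r) := rfl
  rw [hflip, Measure.volume_eq_prod, volume_regionBetween_eq_lintegral' (f := fun y => -(c*‖y‖)) (g := fun y => c*‖y‖)
    ((continuous_const.mul continuous_norm).neg.measurable)
    ((continuous_const.mul continuous_norm).measurable) measurableSet_closedBall,
    cone_lintegral m hm hc hr]

lemma vol_cone_le (m : ℕ) (hm : 1 ≤ m) {c r : ℝ} (hc : 0 ≤ c) (hr : 0 ≤ r) :
    volume {p : EuclideanSpace ℝ (Fin m) × ℝ |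
        p.1 ∈ Metric.closedBall 0 r ∧ p.2 ∈ Icc (-(c*‖p.1‖)) (c*‖p.1‖)}
      ≤ ENNReal.ofReal (2*c*(((m:ℝ)/((m:ℝ)+1)) * ballVol m * r^(m+1))) := by
  have hsub : {p : EuclideanSpace ℝ (Fin m) × ℝ |
      p.1 ∈ Metric.closedBall 0 r ∧ p.2 ∈ Icc (-(c*‖p.1‖)) (c*‖p.1‖)} ⊆
      ({p : EuclideanSpace ℝ (Fin m) × ℝ |
        p.1 ∈ Metric.closedBall 0 r ∧ p.2 ∈ Ioo (-(c*‖p.1‖)) (c*‖p.1‖)} ∪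
       ({p : EuclideanSpace ℝ (Fin m) × ℝ | p.2 = c*‖p.1‖} ∪
        {p : EuclideanSpace ℝ (Fin m) × ℝ | p.2 = -(c*‖p.1‖)})) := by
    rintro ⟨y, t⟩ ⟨hy, ht1, ht2⟩
    rcases eq_or_lt_of_le ht2 with h | h
    · exact Or.inr (Or.inl h)
    rcases eq_or_lt_of_le ht1 with h' | h'
    · exact Or.inr (Or.inr h'.symm)
    exact Or.inl ⟨hy, h', h⟩
  calc volume {p : EuclideanSpace ℝ (Fin m) × ℝ |
        p.1 ∈ Metric.closedBall 0 r ∧ p.2 ∈ Icc (-(c*‖p.1‖)) (c*‖p.1‖)}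
      ≤ volume ({p : EuclideanSpace ℝ (Fin m) × ℝ |
          p.1 ∈ Metric.closedBall 0 r ∧ p.2 ∈ Ioo (-(c*‖p.1‖)) (c*‖p.1‖)} ∪
         ({p : EuclideanSpace ℝ (Fin m) × ℝ | p.2 = c*‖p.1‖} ∪
          {p : EuclideanSpace ℝ (Fin m) × ℝ | p.2 = -(c*‖p.1‖)})) := measure_mono hsub
    _ ≤ volume {p : EuclideanSpace ℝ (Fin m) × ℝ |
          p.1 ∈ Metric.closedBall 0 r ∧ p.2 ∈ Ioo (-(c*‖p.1‖)) (c*‖p.1‖)} +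
        volume ({p : EuclideanSpace ℝ (Fin m) × ℝ | p.2 = c*‖p.1‖} ∪
          {p : EuclideanSpace ℝ (Fin m) × ℝ | p.2 = -(c*‖p.1‖)}) := measure_union_le _ _
    _ ≤ _ := by
        have g1 : volume {p : EuclideanSpace ℝ (Fin m) × ℝ | p.2 = c*‖p.1‖} = 0 :=
          graph_null ((continuous_const.mul continuous_norm).measurable)
        have g2 : volume {p : EuclideanSpace ℝ (Fin m) × ℝ | p.2 = -(c*‖p.1‖)} = 0 :=
          graph_null ((continuous_const.mul continuous_norm).neg.measurable)
        have : volume ({p : EuclideanSpace ℝ (Fin m) × ℝ | p.2 = c*‖p.1‖} ∪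
            {p : EuclideanSpace ℝ (Fin m) × ℝ | p.2 = -(c*‖p.1‖)}) = 0 :=
          le_antisymm (le_trans (measure_union_le _ _) (by rw [g1, g2]; simp)) zero_le
        rw [this, add_zero]
        have hflip : {p : EuclideanSpace ℝ (Fin m) × ℝ |
            p.1 ∈ Metric.closedBall 0 r ∧ p.2 ∈ Ioo (-(c*‖p.1‖)) (c*‖p.1‖)} =
            regionBetween (fun y => -(c*‖y‖)) (fun y => c*‖y‖) (Metric.closedBall 0 r) := rfl
        rw [hflip, Measure.volume_eq_prod, volume_regionBetween_eq_lintegral' (f := fun y => -(c*‖y‖)) (g := fun y => c*‖y‖)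
          ((continuous_const.mul continuous_norm).neg.measurable)
          ((continuous_const.mul continuous_norm).measurable) measurableSet_closedBall,
          cone_lintegral m hm hc hr]

lemma sq_le_helper {p q : ℝ} (hq : 0 ≤ q) (h : p^2 ≤ q^2) : p ≤ q := by
  by_contra h'
  push_neg at h'
  nlinarith

lemma mem_low {a y t : ℝ} (ha : 0 < a) (hA : 2 ≤ a^2) (hy0 : 0 ≤ y)
    (hyρ : y ≤ Real.sqrt (a^2-1)/a) (ht : |t| < (Real.sqrt (a^2-1))⁻¹ * y) :
    a^2*t^2 ≤ y^2 + t^2 ∧ y^2 + t^2 ≤ 1 := by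
  have hc0 : (0:ℝ) < a^2 - 1 := by linarith
  have hsc0 : 0 < Real.sqrt (a^2-1) := Real.sqrt_pos.2 hc0
  have hsc2 : (Real.sqrt (a^2-1))^2 = a^2-1 := Real.sq_sqrt hc0.le
  set sc := Real.sqrt (a^2-1)
  have ht2 : t^2 ≤ (sc⁻¹)^2 * y^2 := by nlinarith [abs_nonneg t, sq_abs t]
  have hb2 : (sc⁻¹)^2 * (a^2-1) = 1 := by
    rw [← hsc2]; field_simp
  have hy2 : y^2 ≤ (sc/a)^2 := by nlinarith [div_nonneg hsc0.le ha.le]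
  have hρ2 : (sc/a)^2 = 1 - 1/a^2 := by
    rw [div_pow, hsc2]; field_simp
  constructor
  · nlinarith
  · have key : (sc⁻¹)^2 * (sc/a)^2 = 1/a^2 := by
      rw [← mul_pow]
      rw [show sc⁻¹ * (sc/a) = 1/a by field_simp, div_pow, one_pow]
    nlinarith [mul_le_mul_of_nonneg_left hy2 (sq_nonneg (sc⁻¹))]
lemma mem_up {a y t : ℝ} (ha : 0 < a) (hA : 2 ≤ a^2) (hy0 : 0 ≤ y)
    (h1 : a^2*t^2 ≤ y^2 + t^2) (h2 : y^2 + t^2 ≤ 1) :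
    y ≤ 1 ∧ |t| ≤ (Real.sqrt (a^2-1))⁻¹ * y := by
  have hc0 : (0:ℝ) < a^2 - 1 := by linarith
  have hsc0 : 0 < Real.sqrt (a^2-1) := Real.sqrt_pos.2 hc0
  have hsc2 : (Real.sqrt (a^2-1))^2 = a^2-1 := Real.sq_sqrt hc0.le
  set sc := Real.sqrt (a^2-1)
  have hb2 : (sc⁻¹)^2 * (a^2-1) = 1 := by rw [← hsc2]; field_simp
  refine ⟨sq_le_helper (by norm_num) (by nlinarith), ?_⟩
  apply sq_le_helper (by positivity)
  rw [sq_abs, mul_pow]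
  nlinarith

lemma arith_main (m : ℕ) (hm1 : 1 ≤ (m:ℝ)) {a K J : ℝ} (ha : 0 < a) (hK : 0 < K)
    (hA : 2*(m:ℝ)+2 ≤ a^2)
    (hJup : J ≤ K * (Real.sqrt (a^2-1))⁻¹)
    (hJlow : K * (Real.sqrt (a^2-1))⁻¹ * (Real.sqrt (a^2-1)/a)^(m+1) ≤ J) :
    |J - K*(1/a)| ≤ ((m:ℝ)+1) * (K*(1/a)) * min 1 (1/a^2) := by
  have ha2 : (2:ℝ) ≤ a^2 := by linarith
  have hc0 : (0:ℝ) < a^2 - 1 := by linarith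
  have hsc0 : 0 < Real.sqrt (a^2-1) := Real.sqrt_pos.2 hc0
  have hsc2 : (Real.sqrt (a^2-1))^2 = a^2-1 := Real.sq_sqrt hc0.le
  set sc := Real.sqrt (a^2-1) with hsc
  set b : ℝ := sc⁻¹ with hb
  have hb0 : 0 < b := by positivity
  set ρ : ℝ := sc / a with hρ
  have hρ0 : 0 < ρ := by positivity
  have hρ2 : ρ^2 = 1 - 1/a^2 := by rw [hρ, div_pow, hsc2]; field_simp
  set u : ℝ := 1/a^2 with hu
  have hu0 : 0 < u := by positivity
  have huA : u * a^2 = 1 := by rw [hu]; field_simp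
  have hu2 : u ≤ 1/2 := by
    rw [hu, div_le_div_iff₀ (by positivity) (by norm_num)]; linarith
  have hmu : (m:ℝ) * u ≤ 1/2 := by
    have h' : u*(2*(m:ℝ)+2) ≤ u*a^2 := mul_le_mul_of_nonneg_left hA hu0.le
    rw [huA] at h'
    nlinarith
  have hKa : 0 < K * (1/a) := by positivity
  have hbρ : b * ρ = 1/a := by rw [hb, hρ]; field_simp
  have hρm : 1 - (m:ℝ)*u ≤ ρ^m := by
    apply sq_le_helper (pow_nonneg hρ0.le m)
    have hBer : 1 - (m:ℝ)*u ≤ (1-u)^m := by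
      have hB2 := one_add_mul_le_pow (a := -u) (by linarith) m
      calc (1:ℝ) - (m:ℝ)*u = 1 + (m:ℝ)*(-u) := by ring
        _ ≤ (1 + -u)^m := hB2
        _ = (1-u)^m := by ring_nf
    have h1 : (ρ^m)^2 = (1-u)^m := by
      rw [← pow_mul, mul_comm m 2, pow_mul, hρ2]
    rw [h1]
    have h0 : 0 ≤ 1 - (m:ℝ)*u := by linarith
    have hmu0 : 0 ≤ (m:ℝ)*u := mul_nonneg (by linarith) hu0.le
    have hsq' : (1-(m:ℝ)*u)^2 ≤ 1-(m:ℝ)*u := by nlinarith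
    linarith
  have hbu : b ≤ (1+u)/a := by
    have hsq : (a/(1+u))^2 ≤ a^2-1 := by
      rw [div_pow, div_le_iff₀ (by positivity)]
      nlinarith
    have hle : a/(1+u) ≤ sc := by
      apply sq_le_helper hsc0.le
      rw [hsc2]; exact hsq
    rw [hb]
    calc sc⁻¹ ≤ (a/(1+u))⁻¹ := by
          apply inv_anti₀ (by positivity) hle
      _ = (1+u)/a := by rw [inv_div]
  have hKbρ : K * b * ρ^(m+1) = K * (1/a) * ρ^m := by
    rw [pow_succ]
    calc K * b * (ρ^m * ρ) = K * ρ^m * (b * ρ) := by ring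
      _ = K * ρ^m * (1/a) := by rw [hbρ]
      _ = K * (1/a) * ρ^m := by ring
  have hmin : min 1 (1/a^2) = u := by
    rw [hu, min_eq_right]; rw [hu] at hu2; linarith
  rw [hmin]
  rw [abs_le]
  constructor
  · have h1 : K * (1/a) * (1 - (m:ℝ)*u) ≤ J := by
      calc K * (1/a) * (1 - (m:ℝ)*u) ≤ K * (1/a) * ρ^m :=
            mul_le_mul_of_nonneg_left hρm hKa.le
        _ = K * b * ρ^(m+1) := hKbρ.symm
        _ ≤ J := hJlow
    have e2 : ((m:ℝ)+1) * (K*(1/a)) * u = K*(1/a)*((m:ℝ)*u) + K*(1/a)*u := by ring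
    have e1 : K * (1/a) * (1 - (m:ℝ)*u) = K*(1/a) - K*(1/a)*((m:ℝ)*u) := by ring
    have e3 : 0 ≤ K*(1/a)*u := mul_nonneg hKa.le hu0.le
    linarith
  · have h2 : J ≤ K * (1/a) * (1+u) := by
      calc J ≤ K * b := hJup
        _ ≤ K * ((1+u)/a) := mul_le_mul_of_nonneg_left hbu hK.le
        _ = K * (1/a) * (1+u) := by ring
    have e2 : ((m:ℝ)+1) * (K*(1/a)) * u = K*(1/a)*((m:ℝ)*u) + K*(1/a)*u := by ring
    have e4 : K * (1/a) * (1+u) = K*(1/a) + K*(1/a)*u := by ring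
    have e3 : 0 ≤ K*(1/a)*((m:ℝ)*u) := mul_nonneg hKa.le (mul_nonneg (by linarith) hu0.le)
    linarith

lemma arith_small {a K J B T C : ℝ} (ha : 0 < a) (hK : 0 < K) (hB0 : 0 ≤ B)
    (hT4 : 4 ≤ T) (hA : a^2 < T) (hJ0 : 0 ≤ J) (hJB : J ≤ B)
    (hCT : T*Real.sqrt T*B/K + T ≤ C) (hC0 : 0 ≤ C) :
    |J - K*(1/a)| ≤ C * (K*(1/a)) * min 1 (1/a^2) := by
  have hT0 : T ≠ 0 := by linarith
  have hK0 : K ≠ 0 := hK.ne'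
  have ha0 : a ≠ 0 := ha.ne'
  have hKa : 0 < K * (1/a) := by positivity
  have hminT : 1/T ≤ min 1 (1/a^2) := by
    apply le_min
    · rw [div_le_one (by linarith)]; linarith
    · exact one_div_le_one_div_of_le (by positivity) hA.le
  have hasq : a ≤ Real.sqrt T := by
    rw [← Real.sqrt_sq ha.le]
    exact Real.sqrt_le_sqrt hA.le
  have habs : |J - K*(1/a)| ≤ B + K*(1/a) := by
    rw [abs_le]
    constructor <;> nlinarith
  have hkey : B + K*(1/a) ≤ C * (K*(1/a)) * (1/T) := by
    have h1 : (T*Real.sqrt T*B/K + T) * (K*(1/a)) * (1/T) = Real.sqrt T*B/a + K*(1/a) := by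
      field_simp
    have h2 : B ≤ Real.sqrt T*B/a := by
      rw [le_div_iff₀ ha]
      nlinarith [mul_le_mul_of_nonneg_right hasq hB0]
    calc B + K*(1/a) ≤ Real.sqrt T*B/a + K*(1/a) := by linarith
      _ = (T*Real.sqrt T*B/K + T) * (K*(1/a)) * (1/T) := h1.symm
      _ ≤ C * (K*(1/a)) * (1/T) :=
          mul_le_mul_of_nonneg_right (mul_le_mul_of_nonneg_right hCT hKa.le) (by positivity)
  calc |J - K*(1/a)| ≤ B + K*(1/a) := habs
    _ ≤ C * (K*(1/a)) * (1/T) := hkey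
    _ ≤ C * (K*(1/a)) * min 1 (1/a^2) :=
        mul_le_mul_of_nonneg_left hminT (mul_nonneg hC0 hKa.le)


lemma J_est (m : ℕ) (hm : 1 ≤ m) :
    ∃ C : ℝ, 0 < C ∧ ∀ a : ℝ, 0 < a →
      |(volume {x : EuclideanSpace ℝ (Fin (m+1)) | a * |x 0| ≤ ‖x‖ ∧ ‖x‖ ≤ 1}).toReal
        - 2*((m:ℝ)/((m:ℝ)+1)) * ballVol m * (1/a)|
        ≤ C * (2*((m:ℝ)/((m:ℝ)+1)) * ballVol m * (1/a)) * min 1 (1/a^2) := by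
  have hm1 : (1:ℝ) ≤ (m:ℝ) := by exact_mod_cast hm
  have hq : (0:ℝ) ≤ (m:ℝ)/((m:ℝ)+1) := by positivity
  have hbV : (0:ℝ) ≤ ballVol m := (ballVol_pos m).le
  set K : ℝ := 2*((m:ℝ)/((m:ℝ)+1)) * ballVol m with hKdef
  have hK : 0 < K := by
    rw [hKdef]
    have h1 : (0:ℝ) < (m:ℝ)/((m:ℝ)+1) := by positivity
    have h2 := ballVol_pos m
    nlinarith
  set B : ℝ := (volume (Metric.closedBall (0 : EuclideanSpace ℝ (Fin (m+1))) 1)).toReal with hB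
  have hB0 : 0 ≤ B := ENNReal.toReal_nonneg
  set T : ℝ := 2*(m:ℝ)+2 with hT
  have hT4 : (4:ℝ) ≤ T := by rw [hT]; linarith
  set C : ℝ := max ((m:ℝ)+1) (T*Real.sqrt T*B/K + T) with hC
  have hCpos : 0 < C := lt_of_lt_of_le (by linarith) (le_max_left _ _)
  have hCm : (m:ℝ)+1 ≤ C := le_max_left _ _
  have hCT : T*Real.sqrt T*B/K + T ≤ C := le_max_right _ _
  clear_value C
  refine ⟨C, hCpos, ?_⟩
  intro a ha
  have hnsq : ∀ x : EuclideanSpace ℝ (Fin (m+1)), ‖x‖^2 = ∑ j, x j ^2 := by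
    intro x
    rw [EuclideanSpace.norm_eq, Real.sq_sqrt (by positivity)]
    congr 1; ext j; rw [Real.norm_eq_abs, sq_abs]
  have hsetEq : {x : EuclideanSpace ℝ (Fin (m+1)) | a * |x 0| ≤ ‖x‖ ∧ ‖x‖ ≤ 1}
      = {x : EuclideanSpace ℝ (Fin (m+1)) |
          a^2 * (x 0)^2 ≤ (∑ j, x j ^ 2) ∧ (∑ j, x j ^ 2) ≤ 1} := by
    ext x
    have h1 := hnsq x
    have hn0 : (0:ℝ) ≤ ‖x‖ := norm_nonneg x
    simp only [Set.mem_setOf_eq]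
    constructor
    · rintro ⟨hle, hle1⟩
      constructor
      · rw [← h1]
        have hmm := mul_le_mul hle hle (by positivity) hn0
        nlinarith [sq_abs (x 0)]
      · rw [← h1]; nlinarith
    · rintro ⟨hle, hle1⟩
      rw [← h1] at hle hle1
      constructor
      · have hsq2 : (a * |x 0|)^2 ≤ ‖x‖^2 := by rw [mul_pow, sq_abs]; exact hle
        exact sq_le_helper hn0 hsq2
      · exact sq_le_helper (by norm_num) (by rw [one_pow]; exact hle1)
  have hPmeas : MeasurableSet {q : ℝ × ℝ | a^2 * q.2^2 ≤ q.1 ∧ q.1 ≤ 1} := by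
    apply MeasurableSet.inter
    · exact measurableSet_le (measurable_const.mul (measurable_snd.pow_const 2)) measurable_fst
    · exact measurableSet_le measurable_fst measurable_const
  have htrans := vol_transfer m (fun s t => a^2 * t^2 ≤ s ∧ s ≤ 1) hPmeas
  set S' : Set (EuclideanSpace ℝ (Fin m) × ℝ) :=
    {p : EuclideanSpace ℝ (Fin m) × ℝ |
      a^2 * p.2^2 ≤ ‖p.1‖^2 + p.2^2 ∧ ‖p.1‖^2 + p.2^2 ≤ 1} with hS'
  have hvolS : volume {x : EuclideanSpace ℝ (Fin (m+1)) | a * |x 0| ≤ ‖x‖ ∧ ‖x‖ ≤ 1}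
      = volume S' := by rw [hsetEq]; exact htrans
  set J : ℝ := (volume {x : EuclideanSpace ℝ (Fin (m+1)) | a * |x 0| ≤ ‖x‖ ∧ ‖x‖ ≤ 1}).toReal
    with hJdef
  have hJS' : J = (volume S').toReal := by rw [hJdef, hvolS]
  have hJB : J ≤ B := by
    rw [hJdef, hB]
    apply ENNReal.toReal_mono (measure_closedBall_lt_top).ne
    apply measure_mono
    intro x hx
    exact mem_closedBall_zero_iff.2 hx.2
  have hJ0 : 0 ≤ J := ENNReal.toReal_nonneg
  clear_value J
  have hmin0 : (0:ℝ) ≤ min 1 (1/a^2) := le_min (by norm_num) (by positivity)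
  have hKa : 0 < K * (1/a) := mul_pos hK (by positivity)
  by_cases hA : 2*(m:ℝ)+2 ≤ a^2
  · -- main regime
    have ha2 : (2:ℝ) ≤ a^2 := by linarith
    have hc0 : (0:ℝ) < a^2 - 1 := by linarith
    have hsc0 : 0 < Real.sqrt (a^2-1) := Real.sqrt_pos.2 hc0
    have hb0 : (0:ℝ) < (Real.sqrt (a^2-1))⁻¹ := by positivity
    have hρ0 : (0:ℝ) < Real.sqrt (a^2-1)/a := by positivity
    have hLsub : {p : EuclideanSpace ℝ (Fin m) × ℝ |
        p.1 ∈ Metric.closedBall 0 (Real.sqrt (a^2-1)/a) ∧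
          p.2 ∈ Set.Ioo (-((Real.sqrt (a^2-1))⁻¹*‖p.1‖)) ((Real.sqrt (a^2-1))⁻¹*‖p.1‖)} ⊆ S' := by
      rintro ⟨y, t⟩ ⟨hy, ht⟩
      exact mem_low ha ha2 (norm_nonneg y) (mem_closedBall_zero_iff.1 hy)
        (abs_lt.2 ⟨ht.1, ht.2⟩)
    have hUsub : S' ⊆ {p : EuclideanSpace ℝ (Fin m) × ℝ |
        p.1 ∈ Metric.closedBall 0 1 ∧
          p.2 ∈ Set.Icc (-((Real.sqrt (a^2-1))⁻¹*‖p.1‖)) ((Real.sqrt (a^2-1))⁻¹*‖p.1‖)} := by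
      rintro ⟨y, t⟩ ⟨h1, h2⟩
      obtain ⟨hy1, ht1⟩ := mem_up ha ha2 (norm_nonneg y) h1 h2
      exact ⟨mem_closedBall_zero_iff.2 hy1, abs_le.1 ht1⟩
    have hnn1 : (0:ℝ) ≤ 2*(Real.sqrt (a^2-1))⁻¹
        *(((m:ℝ)/((m:ℝ)+1)) * ballVol m * (Real.sqrt (a^2-1)/a)^(m+1)) :=
      mul_nonneg (mul_nonneg (by norm_num) hb0.le)
        (mul_nonneg (mul_nonneg hq hbV) (pow_nonneg hρ0.le _))
    have hnn2 : (0:ℝ) ≤ 2*(Real.sqrt (a^2-1))⁻¹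
        *(((m:ℝ)/((m:ℝ)+1)) * ballVol m * (1:ℝ)^(m+1)) :=
      mul_nonneg (mul_nonneg (by norm_num) hb0.le)
        (mul_nonneg (mul_nonneg hq hbV) (pow_nonneg (by norm_num) _))
    have hlow : ENNReal.ofReal (2*(Real.sqrt (a^2-1))⁻¹
        *(((m:ℝ)/((m:ℝ)+1)) * ballVol m * (Real.sqrt (a^2-1)/a)^(m+1))) ≤ volume S' :=
      le_trans (vol_cone_ge m hm hb0.le hρ0.le) (measure_mono hLsub)
    have hup : volume S' ≤ ENNReal.ofReal (2*(Real.sqrt (a^2-1))⁻¹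
        *(((m:ℝ)/((m:ℝ)+1)) * ballVol m * (1:ℝ)^(m+1))) :=
      le_trans (measure_mono hUsub) (vol_cone_le m hm hb0.le (by norm_num))
    have hne : volume S' ≠ ⊤ := (lt_of_le_of_lt hup ENNReal.ofReal_lt_top).ne
    have hJup : J ≤ K * (Real.sqrt (a^2-1))⁻¹ := by
      have h2 := ENNReal.toReal_mono (ENNReal.ofReal_ne_top) hup
      rw [ENNReal.toReal_ofReal hnn2] at h2
      calc J = (volume S').toReal := hJS'
        _ ≤ 2*(Real.sqrt (a^2-1))⁻¹*(((m:ℝ)/((m:ℝ)+1)) * ballVol m * (1:ℝ)^(m+1)) := h2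
        _ = K * (Real.sqrt (a^2-1))⁻¹ := by rw [hKdef]; ring
    have hJlow : K * (Real.sqrt (a^2-1))⁻¹ * (Real.sqrt (a^2-1)/a)^(m+1) ≤ J := by
      have h2 := ENNReal.toReal_mono hne hlow
      rw [ENNReal.toReal_ofReal hnn1] at h2
      calc K * (Real.sqrt (a^2-1))⁻¹ * (Real.sqrt (a^2-1)/a)^(m+1)
          = 2*(Real.sqrt (a^2-1))⁻¹
            *(((m:ℝ)/((m:ℝ)+1)) * ballVol m * (Real.sqrt (a^2-1)/a)^(m+1)) := by
            rw [hKdef]; ring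
        _ ≤ (volume S').toReal := h2
        _ = J := hJS'.symm
    calc |J - K*(1/a)| ≤ ((m:ℝ)+1) * (K*(1/a)) * min 1 (1/a^2) :=
          arith_main m hm1 ha hK hA hJup hJlow
      _ ≤ C * (K*(1/a)) * min 1 (1/a^2) :=
          mul_le_mul_of_nonneg_right (mul_le_mul_of_nonneg_right hCm hKa.le) hmin0
  · -- small a regime
    push_neg at hA
    exact arith_small ha hK hB0 hT4 (by rw [hT]; exact hA) hJ0 hJB hCT hCpos.le

/-- The `(N−1)`-dimensional volume `I(w,z)` of
`{ t ∈ (ℝw)^⊥ : |⟨z,t⟩| ≤ ‖t‖ ≤ 1 }`. -/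
def Ivol (N : ℕ) (w z : EuclideanSpace ℝ (Fin N)) : ℝ :=
  (volume {t : ↥(Submodule.span ℝ {w})ᗮ |
    |(inner ℝ z (t : EuclideanSpace ℝ (Fin N)) : ℝ)| ≤ ‖t‖ ∧ ‖t‖ ≤ 1}).toReal

lemma reduce (N : ℕ) (hN : 3 ≤ N) (w z : EuclideanSpace ℝ (Fin N))
    (h : LinearIndependent ℝ ![w, z]) :
    ∃ a : ℝ, 0 < a ∧ 0 < ‖w‖ ∧
      ‖w‖^2*‖z‖^2 - (inner ℝ w z : ℝ)^2 = (‖w‖ * a)^2 ∧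
      Ivol N w z = (volume {x : EuclideanSpace ℝ (Fin (N-2+1)) |
        a * |x 0| ≤ ‖x‖ ∧ ‖x‖ ≤ 1}).toReal := by
  classical
  have hp := LinearIndependent.pair_iff.mp h
  have hw : w ≠ 0 := by
    intro hw0
    have := (hp 1 0 (by simp [hw0])).1
    norm_num at this
  have hwn : 0 < ‖w‖ := norm_pos_iff.2 hw
  have hz_not : z ∉ Submodule.span ℝ {w} := by
    intro hz
    obtain ⟨c, hc⟩ := Submodule.mem_span_singleton.1 hz
    have := (hp c (-1) (by rw [← hc]; module)).2
    norm_num at this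
  set E := (Submodule.span ℝ {w})ᗮ with hE
  set z' : ↥E := E.orthogonalProjectionOnto z with hz'def
  have hz' : z' ≠ 0 := by
    intro h0
    apply hz_not
    have hmem : z ∈ Eᗮ := Submodule.orthogonalProjectionOnto_eq_zero_iff.1 h0
    rwa [hE, Submodule.orthogonal_orthogonal] at hmem
  set a : ℝ := ‖z'‖ with ha_def
  have ha : 0 < a := norm_pos_iff.2 hz'
  refine ⟨a, ha, hwn, ?_, ?_⟩
  · -- delta identity
    set ip : ℝ := inner ℝ w z with hip
    have hnorm2 : ‖z‖^2 = ‖(Submodule.span ℝ {w}).orthogonalProjectionOnto z‖^2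
        + ‖(Submodule.span ℝ {w})ᗮ.orthogonalProjectionOnto z‖^2 :=
      Submodule.norm_sq_eq_add_norm_sq_projection z (Submodule.span ℝ {w})
    have hproj : (((Submodule.span ℝ {w}).orthogonalProjectionOnto z : EuclideanSpace ℝ (Fin N)))
        = ((inner ℝ w z : ℝ) / (‖w‖^2 : ℝ)) • w := Submodule.starProjection_singleton (𝕜 := ℝ) z
    have hPn : ‖(Submodule.span ℝ {w}).orthogonalProjectionOnto z‖
        = |(inner ℝ w z : ℝ)| / ‖w‖ := by
      have : ‖(Submodule.span ℝ {w}).orthogonalProjectionOnto z‖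
          = ‖(((Submodule.span ℝ {w}).orthogonalProjectionOnto z : EuclideanSpace ℝ (Fin N)))‖ := rfl
      rw [this, hproj, norm_smul, Real.norm_eq_abs, abs_div, abs_of_pos (by positivity :
        (0:ℝ) < ‖w‖^2)]
      field_simp
    have haE : ‖(Submodule.span ℝ {w})ᗮ.orthogonalProjectionOnto z‖ = a := rfl
    rw [haE, hPn] at hnorm2
    have hw0 : ‖w‖ ≠ 0 := hwn.ne'
    have h2 : ‖z‖^2 = ip^2/‖w‖^2 + a^2 := by
      rw [hnorm2, div_pow, sq_abs, hip]
    have h3 : ‖z‖^2 * ‖w‖^2 = ip^2 + a^2*‖w‖^2 := by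
      rw [h2]; field_simp
    linear_combination h3
  · -- the volume identity
    have hfr : Module.finrank ℝ ↥E = N - 2 + 1 := by
      have h1 : Module.finrank ℝ (Submodule.span ℝ {w}) = 1 := finrank_span_singleton hw
      have h2 := Submodule.finrank_add_finrank_orthogonal (K := Submodule.span ℝ {w})
      rw [h1, finrank_euclideanSpace_fin, ← hE] at h2
      omega
    set u : ↥E := (‖z'‖⁻¹ : ℝ) • z' with hu_def
    have hun : ‖u‖ = 1 := norm_smul_inv_norm hz'
    have hON : Orthonormal ℝ (({0} : Set (Fin (N-2+1))).restrict (fun _ => u)) := by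
      constructor
      · intro i; exact hun
      · intro i j hij
        exact absurd (Subtype.ext (by
          rw [Set.mem_singleton_iff.1 i.2, Set.mem_singleton_iff.1 j.2])) hij
    obtain ⟨b, hb⟩ := hON.exists_orthonormalBasis_extension_of_card_eq
      (by rw [hfr]; simp)
    have hb0 : b 0 = u := hb 0 rfl
    have key : ∀ t : ↥E, (inner ℝ z (t : EuclideanSpace ℝ (Fin N)) : ℝ) = a * (b.repr t 0) := by
      intro t
      have h1 : b.repr t 0 = (inner ℝ (b 0) t : ℝ) := b.repr_apply_apply t 0
      have h2 : (inner ℝ (b 0) t : ℝ) = ‖z'‖⁻¹ * (inner ℝ z' t : ℝ) := by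
        rw [hb0, hu_def, real_inner_smul_left]
      have h3 : (inner ℝ z' t : ℝ) = (inner ℝ (z' : EuclideanSpace ℝ (Fin N))
          (t : EuclideanSpace ℝ (Fin N)) : ℝ) := Submodule.coe_inner E z' t
      have h4 : (inner ℝ (z' : EuclideanSpace ℝ (Fin N)) (t : EuclideanSpace ℝ (Fin N)) : ℝ)
          = (inner ℝ z (t : EuclideanSpace ℝ (Fin N)) : ℝ) := by
        rw [hz'def]
        rw [← Submodule.starProjection_apply, Submodule.inner_starProjection_left_eq_right,
          Submodule.starProjection_apply, Submodule.orthogonalProjectionOnto_mem_subspace_eq_self]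
      rw [h1, h2, h3, h4, ha_def, ← mul_assoc, mul_inv_cancel₀ (norm_ne_zero_iff.2 hz'),
        one_mul]
    have hnorm : ∀ t : ↥E, ‖b.repr t‖ = ‖t‖ := fun t => b.repr.norm_map t
    have hsetEq : {t : ↥E | |(inner ℝ z (t : EuclideanSpace ℝ (Fin N)) : ℝ)| ≤ ‖t‖ ∧ ‖t‖ ≤ 1}
        = (b.repr) ⁻¹' {x : EuclideanSpace ℝ (Fin (N-2+1)) | a * |x 0| ≤ ‖x‖ ∧ ‖x‖ ≤ 1} := by
      ext t
      simp only [Set.mem_setOf_eq, Set.mem_preimage]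
      rw [key t, abs_mul, abs_of_pos ha, hnorm t]
    have hmeas : MeasurableSet {x : EuclideanSpace ℝ (Fin (N-2+1)) |
        a * |x 0| ≤ ‖x‖ ∧ ‖x‖ ≤ 1} := by
      have hc1 : Continuous fun x : EuclideanSpace ℝ (Fin (N-2+1)) => a * |x 0| := by
        fun_prop
      have hc2 : Continuous fun x : EuclideanSpace ℝ (Fin (N-2+1)) => ‖x‖ := continuous_norm
      exact ((isClosed_le hc1 hc2).inter (isClosed_le hc2 continuous_const)).measurableSet
    rw [Ivol]
    rw [hsetEq]
    congr 1
    exact b.measurePreserving_repr.measure_preimage hmeas.nullMeasurableSet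

/-- Let `N ≥ 3` and `w, z ∈ ℝ^N` linearly independent; set
`δ = ‖w‖²‖z‖² − ⟨w,z⟩²`. Then
`I(w,z) = 2·((N−2)/(N−1))·V_{N−2}·(‖w‖/δ^{1/2})·(1 + O(min{1, ‖w‖²/δ}))`,
with implied constant depending only on `N`. -/
theorem stmt13 (N : ℕ) (hN : 3 ≤ N) :
    ∃ C : ℝ, 0 < C ∧ ∀ w z : EuclideanSpace ℝ (Fin N), LinearIndependent ℝ ![w, z] →
      |Ivol N w z -
          2 * (((N : ℝ) - 2) / ((N : ℝ) - 1)) * ballVol (N - 2) *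
            (‖w‖ / Real.sqrt (‖w‖ ^ 2 * ‖z‖ ^ 2 - (inner ℝ w z : ℝ) ^ 2))| ≤
        C * (2 * (((N : ℝ) - 2) / ((N : ℝ) - 1)) * ballVol (N - 2) *
            (‖w‖ / Real.sqrt (‖w‖ ^ 2 * ‖z‖ ^ 2 - (inner ℝ w z : ℝ) ^ 2))) *
          min 1 (‖w‖ ^ 2 / (‖w‖ ^ 2 * ‖z‖ ^ 2 - (inner ℝ w z : ℝ) ^ 2)) := by
  obtain ⟨C, hC, hbound⟩ := J_est (N-2) (by omega)
  refine ⟨C, hC, ?_⟩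
  intro w z hli
  obtain ⟨a, ha, hwn, hδ, hIv⟩ := reduce N hN w z hli
  have h2N : (2:ℕ) ≤ N := by omega
  have hc2 : ((N-2:ℕ):ℝ) = (N:ℝ) - 2 := by
    rw [Nat.cast_sub h2N]; norm_num
  have hc1 : ((N:ℝ)) - 1 = ((N-2:ℕ):ℝ) + 1 := by rw [hc2]; ring
  have hsqrt : Real.sqrt (‖w‖^2*‖z‖^2 - (inner ℝ w z:ℝ)^2) = ‖w‖ * a := by
    rw [hδ, Real.sqrt_sq (by positivity)]
  have hfrac : ‖w‖ / (‖w‖*a) = 1/a := by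
    rw [div_mul_eq_div_div, div_self hwn.ne']
  have hmin : ‖w‖^2 / (‖w‖^2*‖z‖^2 - (inner ℝ w z:ℝ)^2) = 1/a^2 := by
    rw [hδ, mul_pow]
    rw [div_mul_eq_div_div, div_self (by positivity : (‖w‖:ℝ)^2 ≠ 0)]
  rw [hIv, hsqrt, hfrac, hmin, ← hc2, hc1]
  exact hbound a ha
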